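/- arXiv:2003.09071 — 2 statements merged into one kernel-verified Lean document; each statement's English description precedes it below -/
import Mathlib

section
/- Suppose the measure μ has compact support and g is strictly increasing on [0,∞). Then there is at most one point x_c ∈ ℝⁿ with V(x_c) = 0: if V(x₁) = 0 and V(x₂) = 0 then x₁ = x₂. -/
open MeasureTheory Filter Set

/-- The radial vector field `v(y) = g(|y|) y/|y|` (with `v(0)=0`). -/
noncomputable def radialField {n : ℕ} (g : ℝ → ℝ)
    (y : EuclideanSpace ℝ (Fin n)) : EuclideanSpace ℝ (Fin n) :=
  (g ‖y‖ / ‖y‖) • y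

/-- The vector field `V(x) = ∫ v(x+y) dμ(y)`. -/
noncomputable def VField {n : ℕ} (g : ℝ → ℝ)
    (μ : Measure (EuclideanSpace ℝ (Fin n)))
    (x : EuclideanSpace ℝ (Fin n)) : EuclideanSpace ℝ (Fin n) :=
  ∫ y, radialField g (x + y) ∂μ

lemma radialField_strictMono {n : ℕ} {g : ℝ → ℝ} (hg0 : g 0 = 0)
    (hg_mono : StrictMonoOn g (Ici 0)) (a b : EuclideanSpace ℝ (Fin n)) (hab : a ≠ b) :
    0 < inner (𝕜 := ℝ) (radialField g a - radialField g b) (a - b) := by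
  have gpos : ∀ t : ℝ, 0 < t → 0 < g t := by
    intro t ht
    have := hg_mono (self_mem_Ici) (le_of_lt ht) ht
    rwa [hg0] at this
  have expand : inner (𝕜 := ℝ) (radialField g a - radialField g b) (a - b)
      = (g ‖a‖ / ‖a‖) * ‖a‖ ^ 2 - (g ‖a‖ / ‖a‖) * (inner (𝕜 := ℝ) a b)
        - (g ‖b‖ / ‖b‖) * (inner (𝕜 := ℝ) a b) + (g ‖b‖ / ‖b‖) * ‖b‖ ^ 2 := by
    simp only [radialField, inner_sub_left, inner_sub_right, real_inner_smul_left]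
    rw [real_inner_self_eq_norm_sq, real_inner_self_eq_norm_sq, real_inner_comm b a]
    ring
  rw [expand]
  by_cases ha : a = 0
  · have hb : b ≠ 0 := by rintro rfl; exact hab ha
    subst ha
    have hbn : (0:ℝ) < ‖b‖ := norm_pos_iff.mpr hb
    have hgb : 0 < g ‖b‖ := gpos _ hbn
    simp only [norm_zero, inner_zero_left]
    have : g 0 / 0 * 0 ^ 2 - g 0 / 0 * 0 - g ‖b‖ / ‖b‖ * 0 + g ‖b‖ / ‖b‖ * ‖b‖ ^ 2
        = g ‖b‖ * ‖b‖ := by field_simp; ring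
    rw [this]
    positivity
  · by_cases hb : b = 0
    · subst hb
      have han : (0:ℝ) < ‖a‖ := norm_pos_iff.mpr ha
      have hga : 0 < g ‖a‖ := gpos _ han
      simp only [norm_zero, inner_zero_right]
      have : g ‖a‖ / ‖a‖ * ‖a‖ ^ 2 - g ‖a‖ / ‖a‖ * 0 - g 0 / 0 * 0 + g 0 / 0 * 0 ^ 2
          = g ‖a‖ * ‖a‖ := by field_simp; ring
      rw [this]
      positivity
    · have han : (0:ℝ) < ‖a‖ := norm_pos_iff.mpr ha
      have hbn : (0:ℝ) < ‖b‖ := norm_pos_iff.mpr hb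
      have hga : 0 < g ‖a‖ := gpos _ han
      have hgb : 0 < g ‖b‖ := gpos _ hbn
      set r := ‖a‖ with hr
      set s := ‖b‖ with hs
      set t : ℝ := inner (𝕜 := ℝ) a b with htdef
      have ht : t ≤ r * s := real_inner_le_norm a b
      have hmono : 0 ≤ (g r - g s) * (r - s) := by
        rcases lt_trichotomy r s with h | h | h
        · have := hg_mono (le_of_lt han) (le_of_lt hbn) h
          nlinarith
        · rw [h]; ring_nf; simp
        · have := hg_mono (le_of_lt hbn) (le_of_lt han) h
          nlinarith
      rcases lt_or_eq_of_le ht with hlt | heq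
      · have key : g r / r * r ^ 2 - g r / r * t - g s / s * t + g s / s * s ^ 2
            = (g r - g s) * (r - s) + (g r / r + g s / s) * (r * s - t) := by
          field_simp; ring
        rw [key]
        have h1 : 0 < g r / r + g s / s := by positivity
        nlinarith
      · -- t = r * s forces ‖b‖ • a = ‖a‖ • b
        have hpar : ‖b‖ • a = ‖a‖ • b := inner_eq_norm_mul_iff_real.mp heq
        have hrs : r ≠ s := by
          intro h
          apply hab
          have h' : ‖a‖ = ‖b‖ := h
          have : ‖b‖ • a = ‖b‖ • b := by rw [hpar, h']
          exact smul_right_injective _ (ne_of_gt hbn) this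
        have hmono' : 0 < (g r - g s) * (r - s) := by
          rcases lt_or_gt_of_ne hrs with h | h
          · have := hg_mono (le_of_lt han) (le_of_lt hbn) h
            nlinarith
          · have := hg_mono (le_of_lt hbn) (le_of_lt han) h
            nlinarith
        have key : g r / r * r ^ 2 - g r / r * t - g s / s * t + g s / s * s ^ 2
            = (g r - g s) * (r - s) := by
          rw [heq]; field_simp; ring
        rw [key]; exact hmono'

lemma radialField_continuous {n : ℕ} {g : ℝ → ℝ} (hg_cont : ContinuousOn g (Ici 0))
    (hg0 : g 0 = 0) : Continuous (radialField (n := n) g) := by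
  have hgn : Continuous fun z : EuclideanSpace ℝ (Fin n) => g ‖z‖ :=
    hg_cont.comp_continuous continuous_norm fun z => norm_nonneg z
  rw [continuous_iff_continuousAt]
  intro y
  by_cases hy : y = 0
  · subst hy
    have h0 : radialField g (0 : EuclideanSpace ℝ (Fin n)) = 0 := by
      simp [radialField]
    rw [ContinuousAt, h0]
    apply squeeze_zero_norm (a := fun z : EuclideanSpace ℝ (Fin n) => |g ‖z‖|)
    · intro z
      by_cases hz : z = 0
      · simp [hz, radialField, hg0]
      · have hzn : (0:ℝ) < ‖z‖ := norm_pos_iff.mpr hz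
        have : ‖radialField g z‖ = |g ‖z‖ / ‖z‖| * ‖z‖ := by
          rw [radialField, norm_smul, Real.norm_eq_abs]
        rw [this, abs_div, abs_of_pos hzn, div_mul_cancel₀ _ (ne_of_gt hzn)]
    · have : Tendsto (fun z : EuclideanSpace ℝ (Fin n) => g ‖z‖) (nhds 0) (nhds (g ‖(0:EuclideanSpace ℝ (Fin n))‖)) :=
        hgn.continuousAt
      simp only [norm_zero, hg0] at this
      have habs := this.abs
      simpa using habs
  · have hzn : (0:ℝ) < ‖y‖ := norm_pos_iff.mpr hy
    exact ((hgn.continuousAt).div continuous_norm.continuousAt (ne_of_gt hzn)).smul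
      continuousAt_id

lemma integrable_of_compactSupport {n : ℕ}
    {μ : Measure (EuclideanSpace ℝ (Fin n))} [IsFiniteMeasure μ]
    {f : EuclideanSpace ℝ (Fin n) → EuclideanSpace ℝ (Fin n)} (hf : Continuous f)
    {K : Set (EuclideanSpace ℝ (Fin n))} (hK : IsCompact K) (hKc : μ Kᶜ = 0) :
    Integrable f μ := by
  rw [← integrableOn_univ, ← union_compl_self K]
  refine IntegrableOn.union ?_ ?_
  · exact hf.continuousOn.integrableOn_compact hK
  · unfold IntegrableOn
    rw [Measure.restrict_eq_zero.mpr hKc]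
    exact integrable_zero_measure

theorem center_of_mass_unique_strictMono {n : ℕ} (hn : 1 ≤ n)
    (g : ℝ → ℝ) (hg_cont : ContinuousOn g (Ici 0)) (hg0 : g 0 = 0)
    (hg_mono : StrictMonoOn g (Ici 0))
    (μ : Measure (EuclideanSpace ℝ (Fin n)))
    (hμpos : 0 < μ Set.univ) (hμfin : μ Set.univ < ⊤)
    (hμcpt : ∃ K : Set (EuclideanSpace ℝ (Fin n)), IsCompact K ∧ μ Kᶜ = 0) :
    ∀ x₁ x₂ : EuclideanSpace ℝ (Fin n),
      VField g μ x₁ = 0 → VField g μ x₂ = 0 → x₁ = x₂ := by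
  intro x₁ x₂ h1 h2
  by_contra hne
  haveI : IsFiniteMeasure μ := ⟨hμfin⟩
  obtain ⟨K, hK, hKc⟩ := hμcpt
  have hv : Continuous (radialField (n := n) g) := radialField_continuous hg_cont hg0
  have hint : ∀ x : EuclideanSpace ℝ (Fin n),
      Integrable (fun y => radialField g (x + y)) μ := by
    intro x
    exact integrable_of_compactSupport (hv.comp (continuous_const.add continuous_id)) hK hKc
  set c : EuclideanSpace ℝ (Fin n) := x₁ - x₂ with hc
  have hcne : c ≠ 0 := sub_ne_zero.mpr hne
  set f : EuclideanSpace ℝ (Fin n) → ℝ :=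
    fun y => inner (𝕜 := ℝ) (radialField g (x₁ + y) - radialField g (x₂ + y)) c with hf
  have hfpos : ∀ y, 0 < f y := by
    intro y
    have hne' : x₁ + y ≠ x₂ + y := by
      intro h; exact hne (by simpa using h)
    have := radialField_strictMono hg0 hg_mono (x₁ + y) (x₂ + y) hne'
    have hsub : (x₁ + y) - (x₂ + y) = c := by rw [hc]; abel
    rwa [hsub] at this
  have hFint : Integrable (fun y => radialField g (x₁ + y) - radialField g (x₂ + y)) μ :=
    (hint x₁).sub (hint x₂)
  have hfint : Integrable f μ := hFint.inner_const c
  have hI : ∫ y, f y ∂μ = 0 := by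
    have h := integral_inner (𝕜 := ℝ) hFint c
    have hsum : (∫ y, radialField g (x₁ + y) - radialField g (x₂ + y) ∂μ)
        = VField g μ x₁ - VField g μ x₂ :=
      integral_sub (hint x₁) (hint x₂)
    calc ∫ y, f y ∂μ
        = ∫ y, inner (𝕜 := ℝ) c (radialField g (x₁ + y) - radialField g (x₂ + y)) ∂μ := by
          simp only [hf, real_inner_comm]
      _ = inner (𝕜 := ℝ) c (∫ y, radialField g (x₁ + y) - radialField g (x₂ + y) ∂μ) := h
      _ = 0 := by rw [hsum, h1, h2]; simp
  have hIpos : 0 < ∫ y, f y ∂μ := by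
    rw [integral_pos_iff_support_of_nonneg (fun y => (hfpos y).le) hfint]
    have hsupp : Function.support f = univ :=
      Set.eq_univ_iff_forall.mpr fun y => (hfpos y).ne'
    rwa [hsupp]
  rw [hI] at hIpos
  exact lt_irrefl 0 hIpos
end

section
/- Suppose g has a positive and finite limit at infinity: g(∞) := lim_{r→∞} g(r) exists with 0 < g(∞) < ∞. Then for any Borel measure μ on ℝⁿ with 0 < μ(ℝⁿ) < ∞ (not necessarily compactly supported), there exists a point x_c ∈ ℝⁿ with V(x_c) = 0. -/
open MeasureTheory Filter Set Topology
open Asymptotics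

theorem myHasFDerivAt_norm {F : Type*} [NormedAddCommGroup F] [InnerProductSpace ℝ F]
    {x : F} (hx : x ≠ 0) :
    HasFDerivAt (fun y : F => ‖y‖) (‖x‖⁻¹ • innerSL ℝ x) x := by
  have h1 : HasFDerivAt (fun y : F => ‖y‖ ^ 2) (2 • innerSL ℝ x) x :=
    (hasStrictFDerivAt_norm_sq x).hasFDerivAt
  have h2 : HasDerivAt Real.sqrt (1 / (2 * Real.sqrt (‖x‖ ^ 2))) (‖x‖ ^ 2) :=
    Real.hasDerivAt_sqrt (pow_ne_zero 2 (norm_ne_zero_iff.mpr hx))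
  have h3 := h2.comp_hasFDerivAt x h1
  have hnx : Real.sqrt (‖x‖ ^ 2) = ‖x‖ := Real.sqrt_sq (norm_nonneg x)
  have hfun : (fun y : F => Real.sqrt (‖y‖ ^ 2)) = fun y : F => ‖y‖ := by
    ext y; exact Real.sqrt_sq (norm_nonneg y)
  rw [Function.comp_def, hfun] at h3
  have hne : ‖x‖ ≠ 0 := norm_ne_zero_iff.mpr hx
  have heq : (‖x‖⁻¹ • innerSL ℝ x : F →L[ℝ] ℝ)
      = (1 / (2 * Real.sqrt (‖x‖ ^ 2))) • 2 • (innerSL ℝ) x := by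
    rw [hnx]
    ext v
    simp only [ContinuousLinearMap.coe_smul', Pi.smul_apply, smul_eq_mul, two_smul,
      ContinuousLinearMap.add_apply]
    field_simp
    ring
  rw [heq]
  exact h3

theorem hasFDerivAt_G_norm {F : Type*} [NormedAddCommGroup F] [InnerProductSpace ℝ F]
    {g : ℝ → ℝ} (hg : Continuous g) (hg0 : g 0 = 0) (x : F) :
    HasFDerivAt (fun z : F => ∫ t in (0:ℝ)..‖z‖, g t)
      ((g ‖x‖ / ‖x‖) • innerSL ℝ x) x := by
  rcases eq_or_ne x 0 with rfl | hx
  · have h0 : ((g ‖(0:F)‖ / ‖(0:F)‖) • innerSL ℝ (0 : F)) = 0 := by simp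
    rw [h0, hasFDerivAt_iff_isLittleO_nhds_zero]
    simp only [zero_add, norm_zero, intervalIntegral.integral_same,
      ContinuousLinearMap.zero_apply, sub_zero]
    rw [isLittleO_iff]
    intro ε hε
    obtain ⟨δ, hδ, hδ'⟩ := Metric.continuousAt_iff.mp hg.continuousAt ε hε
    rw [Metric.eventually_nhds_iff]
    refine ⟨δ, hδ, fun {h} hh => ?_⟩
    rw [dist_zero_right] at hh
    have : ‖∫ t in (0:ℝ)..‖h‖, g t‖ ≤ ε * |‖h‖ - 0| := by
      apply intervalIntegral.norm_integral_le_of_norm_le_const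
      intro t ht
      rw [Set.uIoc_of_le (norm_nonneg h)] at ht
      have : dist t 0 < δ := by
        rw [Real.dist_eq, sub_zero, abs_of_pos ht.1]
        exact lt_of_le_of_lt ht.2 hh
      have := hδ' this
      rw [dist_eq_norm, hg0, sub_zero] at this
      exact this.le
    simpa using this
  · have hG : HasDerivAt (fun r => ∫ t in (0:ℝ)..r, g t) (g ‖x‖) ‖x‖ :=
      intervalIntegral.integral_hasDerivAt_right (hg.intervalIntegrable _ _)
        hg.stronglyMeasurable.stronglyMeasurableAtFilter hg.continuousAt
    have h3 := hG.comp_hasFDerivAt x (myHasFDerivAt_norm hx)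
    rw [div_eq_mul_inv, ← smul_smul]
    exact h3

theorem norm_radialField_le {n : ℕ} {g : ℝ → ℝ} (y : EuclideanSpace ℝ (Fin n)) :
    ‖radialField g y‖ ≤ |g ‖y‖| := by
  rcases eq_or_ne y 0 with rfl | hy
  · simp [radialField]
  · have hny : ‖y‖ ≠ 0 := norm_ne_zero_iff.mpr hy
    rw [radialField, norm_smul, Real.norm_eq_abs, abs_div, abs_norm,
      div_mul_cancel₀ _ hny]

theorem continuous_radialField {n : ℕ} {g : ℝ → ℝ} (hg : Continuous g) (hg0 : g 0 = 0) :
    Continuous (radialField (n := n) g) := by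
  rw [continuous_iff_continuousAt]
  intro x
  rcases eq_or_ne x 0 with rfl | hx
  · rw [ContinuousAt]
    have h0 : radialField (n := n) g 0 = 0 := by simp [radialField]
    rw [h0]
    apply squeeze_zero_norm (fun y => norm_radialField_le (g := g) y)
    have : Tendsto (fun y : EuclideanSpace ℝ (Fin n) => |g ‖y‖|) (𝓝 0) (𝓝 |g ‖(0 : EuclideanSpace ℝ (Fin n))‖|) :=
      (continuous_abs.comp (hg.comp continuous_norm)).continuousAt
    simpa [hg0] using this
  · have hny : ‖x‖ ≠ 0 := norm_ne_zero_iff.mpr hx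
    unfold radialField
    exact (((hg.comp continuous_norm).continuousAt.div
      continuous_norm.continuousAt hny).smul continuousAt_id)
set_option maxHeartbeats 1000000
theorem integrable_of_bound {α : Type*} [MeasurableSpace α] {μ : Measure α} [IsFiniteMeasure μ]
    {F : Type*} [NormedAddCommGroup F] {f : α → F} (hf : AEStronglyMeasurable f μ)
    (C : ℝ) (h : ∀ a, ‖f a‖ ≤ C) : Integrable f μ :=
  Integrable.mono' (integrable_const C) hf (Filter.Eventually.of_forall h)

theorem center_of_mass_exists_finite_measure {n : ℕ} (hn : 1 ≤ n)
    (g : ℝ → ℝ) (hg_cont : ContinuousOn g (Ici 0)) (hg0 : g 0 = 0)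
    (ginf : ℝ) (hginf_pos : 0 < ginf) (hg_lim : Tendsto g atTop (𝓝 ginf))
    (μ : Measure (EuclideanSpace ℝ (Fin n)))
    (hμpos : 0 < μ Set.univ) (hμfin : μ Set.univ < ⊤) :
    ∃ xc : EuclideanSpace ℝ (Fin n), VField g μ xc = 0 := by
  classical
  haveI : IsFiniteMeasure μ := ⟨hμfin⟩
  -- replace g by a globally continuous version
  set g1 : ℝ → ℝ := fun r => g (max r 0) with hg1def
  have hg1c : Continuous g1 :=
    hg_cont.comp_continuous (continuous_id.max continuous_const)
      (fun r => mem_Ici.mpr (le_max_right r 0))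
  have hg10 : g1 0 = 0 := by simp [hg1def, hg0]
  have hg1lim : Tendsto g1 atTop (𝓝 ginf) := by
    apply hg_lim.congr'
    filter_upwards [eventually_ge_atTop (0:ℝ)] with r hr
    simp [hg1def, max_eq_left hr]
  have hrf_eq : radialField (n := n) g = radialField g1 := by
    funext y
    simp [radialField, hg1def, max_eq_left (norm_nonneg y)]
  have hVeq : VField g μ = VField g1 μ := by
    funext x; unfold VField; rw [hrf_eq]
  rw [hVeq]
  -- bounds on g1
  obtain ⟨R₁, hR₁0, hR₁⟩ : ∃ R₁ : ℝ, 0 ≤ R₁ ∧ ∀ r, R₁ ≤ r → ginf/2 ≤ g1 r ∧ |g1 r| ≤ 2*ginf := by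
    have hev : ∀ᶠ r in atTop, |g1 r - ginf| < ginf/2 := by
      have := hg1lim.eventually (Metric.ball_mem_nhds ginf (half_pos hginf_pos))
      simpa [Metric.mem_ball, Real.dist_eq] using this
    obtain ⟨R₀, hR₀⟩ := eventually_atTop.mp hev
    refine ⟨max R₀ 0, le_max_right _ _, fun r hr => ?_⟩
    have h := hR₀ r (le_trans (le_max_left _ _) hr)
    rw [abs_sub_lt_iff] at h
    constructor
    · linarith [h.2]
    · rw [abs_le]; constructor <;> linarith [h.1, h.2]
  obtain ⟨C, hC⟩ : ∃ C, ∀ r ∈ Icc (0:ℝ) R₁, ‖g1 r‖ ≤ C :=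
    isCompact_Icc.exists_bound_of_continuousOn hg1c.continuousOn
  set M : ℝ := max C (2*ginf) with hMdef
  have hM0 : 0 < M := lt_of_lt_of_le (by linarith) (le_max_right _ _)
  have hM : ∀ r, |g1 r| ≤ M := by
    intro r
    rcases le_or_gt r 0 with hr | hr
    · have h0 : g1 r = 0 := by simp [hg1def, max_eq_right hr, hg0]
      rw [h0, abs_zero]; exact hM0.le
    rcases le_or_gt r R₁ with hr2 | hr2
    · exact le_trans (by simpa [Real.norm_eq_abs] using hC r ⟨hr.le, hr2⟩) (le_max_left _ _)
    · exact le_trans (hR₁ r hr2.le).2 (le_max_right _ _)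
  -- the potential G
  set G : ℝ → ℝ := fun r => ∫ t in (0:ℝ)..r, g1 t with hGdef
  have hG0 : G 0 = 0 := by simp [hGdef]
  have hGlip : ∀ a b : ℝ, |G a - G b| ≤ M * |a - b| := by
    intro a b
    have h1 : G a - G b = ∫ t in b..a, g1 t :=
      intervalIntegral.integral_interval_sub_left (hg1c.intervalIntegrable 0 a)
        (hg1c.intervalIntegrable 0 b)
    rw [h1, ← Real.norm_eq_abs]
    exact intervalIntegral.norm_integral_le_of_norm_le_const
      (fun t _ => by rw [Real.norm_eq_abs]; exact hM t)
  have hGlower : ∀ r, R₁ ≤ r → (ginf/2) * (r - R₁) - M * R₁ ≤ G r := by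
    intro r hr
    have hsplit : (∫ t in (0:ℝ)..R₁, g1 t) + ∫ t in R₁..r, g1 t = G r :=
      intervalIntegral.integral_add_adjacent_intervals (hg1c.intervalIntegrable 0 R₁)
        (hg1c.intervalIntegrable R₁ r)
    have h1 : -(M * R₁) ≤ ∫ t in (0:ℝ)..R₁, g1 t := by
      have h2 := hGlip R₁ 0
      rw [hG0, sub_zero, sub_zero, abs_of_nonneg hR₁0] at h2
      exact (abs_le.mp h2).1
    have h2 : (ginf/2) * (r - R₁) ≤ ∫ t in R₁..r, g1 t := by
      have hc : ∫ _t in R₁..r, (ginf/2) = (r - R₁) * (ginf/2) := by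
        rw [intervalIntegral.integral_const, smul_eq_mul]
      calc (ginf/2) * (r - R₁) = (r - R₁) * (ginf/2) := by ring
        _ = ∫ _t in R₁..r, (ginf/2) := hc.symm
        _ ≤ ∫ t in R₁..r, g1 t := by
            apply intervalIntegral.integral_mono_on hr intervalIntegrable_const
              (hg1c.intervalIntegrable R₁ r)
            intro t ht
            exact (hR₁ t ht.1).1
    linarith [hsplit]
  have hGc : Continuous G := by
    rw [continuous_iff_continuousAt]
    intro r
    exact (intervalIntegral.integral_hasDerivAt_right (hg1c.intervalIntegrable _ _)
      hg1c.stronglyMeasurable.stronglyMeasurableAtFilter hg1c.continuousAt).continuousAt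
  have hGub : ∀ r : ℝ, |G r| ≤ M * |r| := by
    intro r
    have h1 := hGlip r 0
    rwa [hG0, sub_zero, sub_zero] at h1
  -- derivative of the kernel
  have hrfc : Continuous (radialField (n := n) g1) := continuous_radialField hg1c hg10
  have hrfbound : ∀ z : EuclideanSpace ℝ (Fin n), ‖radialField g1 z‖ ≤ M :=
    fun z => le_trans (norm_radialField_le z) (hM _)
  have hkey : ∀ z : EuclideanSpace ℝ (Fin n), (innerSL ℝ) (radialField g1 z) = (g1 ‖z‖ / ‖z‖) • innerSL ℝ z := by
    intro z
    rw [radialField, map_smulₛₗ]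
    simp [starRingEnd_apply]
  have hφ : ∀ z : EuclideanSpace ℝ (Fin n), HasFDerivAt (fun w : EuclideanSpace ℝ (Fin n) => G ‖w‖) ((innerSL ℝ) (radialField g1 z)) z := by
    intro z
    rw [hkey z]
    exact hasFDerivAt_G_norm hg1c hg10 z
  -- kernel derivative in x
  have hFd : ∀ (y : EuclideanSpace ℝ (Fin n)) (x : EuclideanSpace ℝ (Fin n)), HasFDerivAt (fun x : EuclideanSpace ℝ (Fin n) => G ‖x + y‖ - G ‖y‖)
      ((innerSL ℝ) (radialField g1 (x + y))) x := by
    intro y x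
    have h1 : HasFDerivAt (fun x : EuclideanSpace ℝ (Fin n) => x + y) (ContinuousLinearMap.id ℝ (EuclideanSpace ℝ (Fin n))) x :=
      (hasFDerivAt_id x).add_const y
    have h2 := (hφ (x + y)).comp x h1
    rw [ContinuousLinearMap.comp_id] at h2
    exact h2.sub_const (G ‖y‖)
  -- integrability facts
  have hFbound : ∀ (x y : EuclideanSpace ℝ (Fin n)), |G ‖x + y‖ - G ‖y‖| ≤ M * ‖x‖ := by
    intro x y
    refine le_trans (hGlip _ _) ?_
    have h1 : |‖x + y‖ - ‖y‖| ≤ ‖x‖ := by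
      have h2 := abs_norm_sub_norm_le (x + y) y
      rwa [add_sub_cancel_right] at h2
    exact mul_le_mul_of_nonneg_left h1 hM0.le
  have hFmeas : ∀ x : EuclideanSpace ℝ (Fin n), AEStronglyMeasurable (fun y : EuclideanSpace ℝ (Fin n) => G ‖x + y‖ - G ‖y‖) μ :=
    fun x => (((hGc.comp (continuous_const.add continuous_id).norm).sub
      (hGc.comp continuous_norm))).aestronglyMeasurable
  have hFint : ∀ x : EuclideanSpace ℝ (Fin n), Integrable (fun y : EuclideanSpace ℝ (Fin n) => G ‖x + y‖ - G ‖y‖) μ :=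
    fun x => integrable_of_bound (hFmeas x) (M * ‖x‖)
      (fun y => by rw [Real.norm_eq_abs]; exact hFbound x y)
  have hF'cont : ∀ x : EuclideanSpace ℝ (Fin n), Continuous (fun y : EuclideanSpace ℝ (Fin n) => (innerSL ℝ) (radialField g1 (x + y))) :=
    fun x => (innerSL ℝ).continuous.comp (hrfc.comp (continuous_const.add continuous_id))
  have hF'bound : ∀ (x y : EuclideanSpace ℝ (Fin n)), ‖(innerSL ℝ) (radialField g1 (x + y))‖ ≤ M := by
    intro x y
    rw [innerSL_apply_norm]
    exact hrfbound _
  have hF'int : ∀ x : EuclideanSpace ℝ (Fin n), Integrable (fun y : EuclideanSpace ℝ (Fin n) => (innerSL ℝ) (radialField g1 (x + y))) μ :=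
    fun x => integrable_of_bound (hF'cont x).aestronglyMeasurable M (hF'bound x)
  -- the potential W and its derivative
  set W : EuclideanSpace ℝ (Fin n) → ℝ := fun x => ∫ y, (G ‖x + y‖ - G ‖y‖) ∂μ with hWdef
  have hW : ∀ x₀ : EuclideanSpace ℝ (Fin n), HasFDerivAt W
      (∫ y, (innerSL ℝ) (radialField g1 (x₀ + y)) ∂μ) x₀ := by
    intro x₀
    apply hasFDerivAt_integral_of_dominated_of_fderiv_le (bound := fun _ => M)
      (F' := fun (x : EuclideanSpace ℝ (Fin n)) (y : EuclideanSpace ℝ (Fin n)) => (innerSL ℝ) (radialField g1 (x + y))) (Metric.ball_mem_nhds x₀ one_pos)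
    · exact Eventually.of_forall (fun x => hFmeas x)
    · exact hFint x₀
    · exact (hF'cont x₀).aestronglyMeasurable
    · exact Eventually.of_forall (fun y x _ => hF'bound x y)
    · exact integrable_const M
    · exact Eventually.of_forall (fun y x _ => hFd y x)
  have hWcont : Continuous W :=
    continuous_iff_continuousAt.mpr (fun x => (hW x).differentiableAt.continuousAt)
  -- choose the truncation radius ρ
  set mU : ℝ := (μ Set.univ).toReal with hmUdef
  have hmU0 : 0 < mU := ENNReal.toReal_pos hμpos.ne' hμfin.ne
  set ε : ℝ := min (mU/2) (ginf * mU / (8*M)) with hεdef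
  have hε0 : 0 < ε := lt_min (by linarith) (by positivity)
  obtain ⟨ρ, hρ0, hρmeas⟩ : ∃ ρ : ℝ, 0 ≤ ρ ∧
      (μ (Metric.closedBall (0:EuclideanSpace ℝ (Fin n)) ρ)ᶜ).toReal ≤ ε := by
    have htend : Tendsto (fun k : ℕ => μ (Metric.closedBall (0:EuclideanSpace ℝ (Fin n)) k)ᶜ) atTop
        (𝓝 (μ (⋂ k : ℕ, (Metric.closedBall (0:EuclideanSpace ℝ (Fin n)) k)ᶜ))) := by
      apply tendsto_measure_iInter_atTop
      · exact fun k => measurableSet_closedBall.compl.nullMeasurableSet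
      · intro k l hkl
        exact compl_subset_compl.mpr
          (Metric.closedBall_subset_closedBall (by exact_mod_cast hkl))
      · exact ⟨0, measure_ne_top μ _⟩
    have hempty : (⋂ k : ℕ, (Metric.closedBall (0:EuclideanSpace ℝ (Fin n)) k)ᶜ) = ∅ := by
      apply Set.eq_empty_iff_forall_notMem.mpr
      intro y hy
      obtain ⟨k, hk⟩ := exists_nat_ge ‖y‖
      exact (Set.mem_iInter.mp hy k) (by simpa [Metric.mem_closedBall, dist_zero_right] using hk)
    rw [hempty, measure_empty] at htend
    have hev := (ENNReal.tendsto_atTop_zero.mp htend) (ENNReal.ofReal ε)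
      (by simpa using ENNReal.ofReal_pos.mpr hε0)
    obtain ⟨k, hk⟩ := hev
    exact ⟨k, Nat.cast_nonneg k, ENNReal.toReal_le_of_le_ofReal hε0.le (hk k le_rfl)⟩
  set B : Set (EuclideanSpace ℝ (Fin n)) := Metric.closedBall (0:EuclideanSpace ℝ (Fin n)) ρ with hBdef
  have hBmeas : MeasurableSet B := measurableSet_closedBall
  set mB : ℝ := (μ B).toReal with hmBdef
  set mBc : ℝ := (μ Bᶜ).toReal with hmBcdef
  have hmBc0 : 0 ≤ mBc := ENNReal.toReal_nonneg
  have hsum : mB + mBc = mU := by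
    rw [hmBdef, hmBcdef, hmUdef, ← ENNReal.toReal_add (measure_ne_top μ _) (measure_ne_top μ _),
      measure_add_measure_compl hBmeas]
  have hmBc_ε : mBc ≤ ε := hρmeas
  have hmB_ge : mU/2 ≤ mB := by
    have h1 : ε ≤ mU/2 := min_le_left _ _
    linarith
  -- coercivity
  set K : ℝ := ((ginf/2)*(ρ+R₁) + M*R₁ + M*ρ) * (mU/2) with hKdef
  set T : ℝ := ρ + R₁ + (2*M*(R₁+ρ))/ginf + 1 with hTdef
  have hcoer : ∀ x : EuclideanSpace ℝ (Fin n), T ≤ ‖x‖ → (ginf*mU/8) * ‖x‖ - K ≤ W x := by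
    intro x hx
    have hxnn : (0:ℝ) ≤ ‖x‖ := norm_nonneg x
    set c1 : ℝ := (ginf/2) * (‖x‖ - ρ - R₁) - M * R₁ - M * ρ with hc1def
    have hdiv : 0 ≤ (2*M*(R₁+ρ))/ginf := by positivity
    have hxT : ρ + R₁ + (2*M*(R₁+ρ))/ginf + 1 ≤ ‖x‖ := by rw [hTdef] at hx; exact hx
    have hc1 : 0 ≤ c1 := by
      have h1 : (2*M*(R₁+ρ))/ginf ≤ ‖x‖ - ρ - R₁ - 1 := by linarith
      rw [div_le_iff₀ hginf_pos] at h1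
      rw [hc1def]
      nlinarith [hginf_pos]
    have hxr : R₁ ≤ ‖x‖ - ρ := by linarith
    have hlow1 : ∀ y ∈ B, c1 ≤ G ‖x + y‖ - G ‖y‖ := by
      intro y hy
      rw [hBdef, Metric.mem_closedBall, dist_zero_right] at hy
      have hxy : ‖x‖ - ρ ≤ ‖x + y‖ := by
        have h3 : ‖x‖ - ‖x + y‖ ≤ ‖y‖ := by
          have h4 := norm_sub_norm_le x (x + y)
          simpa using h4
        linarith
      have hG1 : (ginf/2) * (‖x + y‖ - R₁) - M * R₁ ≤ G ‖x + y‖ :=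
        hGlower _ (le_trans hxr hxy)
      have hG2 : G ‖y‖ ≤ M * ρ := by
        have h4 := (abs_le.mp (hGub ‖y‖)).2
        rw [abs_norm] at h4
        exact le_trans h4 (mul_le_mul_of_nonneg_left hy hM0.le)
      have h5 : (ginf/2) * (‖x‖ - ρ - R₁) ≤ (ginf/2) * (‖x + y‖ - R₁) :=
        mul_le_mul_of_nonneg_left (by linarith) (by linarith)
      rw [hc1def]
      linarith
    have hint1 : c1 * mB ≤ ∫ y in B, (G ‖x + y‖ - G ‖y‖) ∂μ :=
      setIntegral_ge_of_const_le_real hBmeas (measure_ne_top μ B) hlow1 (hFint x).integrableOn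
    have hint2 : (-(M * ‖x‖)) * mBc ≤ ∫ y in Bᶜ, (G ‖x + y‖ - G ‖y‖) ∂μ :=
      setIntegral_ge_of_const_le_real hBmeas.compl (measure_ne_top μ _)
        (fun y _ => (abs_le.mp (hFbound x y)).1) (hFint x).integrableOn
    have hadd : (∫ y in B, (G ‖x + y‖ - G ‖y‖) ∂μ) + (∫ y in Bᶜ, (G ‖x + y‖ - G ‖y‖) ∂μ)
        = W x := integral_add_compl hBmeas (hFint x)
    have he1 : c1 * (mU/2) ≤ c1 * mB := mul_le_mul_of_nonneg_left hmB_ge hc1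
    have he2 : M * ‖x‖ * mBc ≤ ginf * mU / 8 * ‖x‖ := by
      have h6 : M * ‖x‖ * mBc ≤ M * ‖x‖ * (ginf * mU / (8*M)) := by
        apply mul_le_mul_of_nonneg_left (le_trans hmBc_ε (min_le_right _ _)) (by positivity)
      have h7 : M * ‖x‖ * (ginf * mU / (8*M)) = ginf * mU / 8 * ‖x‖ := by
        field_simp
      linarith
    have he3 : (ginf*mU/8) * ‖x‖ - K ≤ c1 * (mU/2) - ginf * mU / 8 * ‖x‖ := by
      rw [hc1def, hKdef]
      nlinarith [mul_nonneg (mul_nonneg hginf_pos.le hmU0.le) hxnn]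
    have wsum : c1 * mB + -(M * ‖x‖) * mBc ≤ W x := by
      rw [← hadd]; exact add_le_add hint1 hint2
    set r : ℝ := ‖x‖ with hrdef
    set Wx : ℝ := W x with hWxdef
    clear_value Wx
    clear hadd hint1 hint2 hlow1
    clear_value r c1 K mB mBc mU M
    linarith [wsum, he1, he2, he3]
  -- existence of a global minimum
  have hlin : Tendsto (fun r : ℝ => (ginf*mU/8) * r - K) atTop atTop := by
    apply tendsto_atTop_add_const_right
    exact Tendsto.const_mul_atTop (by positivity) tendsto_id
  have hev2 : ∀ᶠ r : ℝ in atTop, W 0 < (ginf*mU/8) * r - K := hlin.eventually_gt_atTop (W 0)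
  obtain ⟨R₂, hR₂⟩ := eventually_atTop.mp (hev2.and (eventually_ge_atTop T))
  set R₃ : ℝ := max R₂ 0 with hR₃def
  have hR₃0 : (0:ℝ) ≤ R₃ := le_max_right _ _
  have hout : ∀ x : EuclideanSpace ℝ (Fin n), R₃ ≤ ‖x‖ → W 0 < W x := by
    intro x hx
    obtain ⟨h1, h2⟩ := hR₂ ‖x‖ (le_trans (le_max_left _ _) hx)
    exact lt_of_lt_of_le h1 (hcoer x h2)
  obtain ⟨x₀, hx₀K, hx₀min⟩ := (isCompact_closedBall (0:EuclideanSpace ℝ (Fin n)) R₃).exists_isMinOn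
    ⟨0, Metric.mem_closedBall_self hR₃0⟩ hWcont.continuousOn
  have hglobal : ∀ z : EuclideanSpace ℝ (Fin n), W x₀ ≤ W z := by
    intro z
    rcases le_or_gt ‖z‖ R₃ with hz | hz
    · exact hx₀min (by simpa [Metric.mem_closedBall, dist_zero_right] using hz)
    · have h0 : W x₀ ≤ W 0 := hx₀min (Metric.mem_closedBall_self hR₃0)
      exact le_trans h0 (hout z hz.le).le
  have hloc : IsLocalMin W x₀ := Filter.Eventually.of_forall hglobal
  have hzero : (∫ y, (innerSL ℝ) (radialField g1 (x₀ + y)) ∂μ) = 0 :=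
    hloc.hasFDerivAt_eq_zero (hW x₀)
  refine ⟨x₀, ?_⟩
  have hVint : Integrable (fun y : EuclideanSpace ℝ (Fin n) => radialField g1 (x₀ + y)) μ :=
    integrable_of_bound ((hrfc.comp (continuous_const.add continuous_id)).aestronglyMeasurable)
      M (fun y => hrfbound _)
  have h2 : ∀ v : EuclideanSpace ℝ (Fin n), (inner ℝ v (VField g1 μ x₀) : ℝ) = 0 := by
    intro v
    have ha : (inner ℝ v (VField g1 μ x₀) : ℝ)
        = (innerSL ℝ v) (∫ y, radialField g1 (x₀ + y) ∂μ) := by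
      simp only [VField]
      rfl
    have hb : (innerSL ℝ v) (∫ y, radialField g1 (x₀ + y) ∂μ)
        = ∫ y, (innerSL ℝ v) (radialField g1 (x₀ + y)) ∂μ :=
      (ContinuousLinearMap.integral_comp_comm (innerSL ℝ v) hVint).symm
    have hc : (∫ y, (innerSL ℝ v) (radialField g1 (x₀ + y)) ∂μ)
        = ∫ y, ((innerSL ℝ) (radialField g1 (x₀ + y))) v ∂μ := by
      apply integral_congr_ae
      filter_upwards with y
      simp only [innerSL_apply_apply]
      exact real_inner_comm _ _
    have hd : (∫ y, ((innerSL ℝ) (radialField g1 (x₀ + y))) v ∂μ)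
        = (∫ y, (innerSL ℝ) (radialField g1 (x₀ + y)) ∂μ) v :=
      (ContinuousLinearMap.integral_apply (hF'int x₀) v).symm
    rw [ha, hb, hc, hd, hzero]
    rfl
  have h3 := h2 (VField g1 μ x₀)
  rw [real_inner_comm] at h3
  exact inner_self_eq_zero.mp h3
end
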